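/- Let p_1, …, p_r be positive integers and let S be a linear subspace of ℂ^{p_1} ⊗ ⋯ ⊗ ℂ^{p_r} that contains no nonzero decomposable tensor (i.e., no nonzero vector of the form v_1 ⊗ ⋯ ⊗ v_r). Then dim S ≤ ∏_{i=1}^r p_i − ∑_{i=1}^r p_i + r − 1. -/

import Mathlib

open scoped TensorProduct

namespace CES

open MvPolynomial PiTensorProduct

variable {r : ℕ} {p : Fin r → ℕ}

/-- Index type for the variables: one block of `p i` variables per tensor factor. -/
abbrev Idx (p : Fin r → ℕ) := (i : Fin r) × Fin (p i)

/-- Weight giving each variable the indicator multidegree of its block. -/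
def w (p : Fin r → ℕ) : Idx p → (Fin r → ℕ) := fun s => Pi.single s.1 1

/-- Constant multidegree. -/
def δ (r d : ℕ) : Fin r → ℕ := fun _ => d

lemma weight_eval (ν : Idx p →₀ ℕ) (i : Fin r) :
    Finsupp.weight (w p) ν i = ∑ j : Fin (p i), ν ⟨i, j⟩ := by
  classical
  rw [Finsupp.weight_apply, Finsupp.sum_fintype _ _ (by intro s; simp)]
  have : (∑ s : Idx p, ν s • w p s) i = ∑ s : Idx p, ν s • (w p s i) := by
    simp [Finset.sum_apply]
  rw [this]
  rw [← Finset.univ_sigma_univ, Finset.sum_sigma]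
  rw [Finset.sum_eq_single i]
  · apply Finset.sum_congr rfl
    intro j _
    simp [w, Pi.single_apply]
  · intro i' _ hne
    apply Finset.sum_eq_zero
    intro j _
    simp [w, Pi.single_apply, hne]
  · simp


section Tensor
variable (p : Fin r → ℕ)

noncomputable section

/-- basis candidates -/
def eJ (J : ∀ i, Fin (p i)) : ⨂[ℂ] i, (Fin (p i) → ℂ) :=
  tprod ℂ (fun i => Pi.single (J i) 1)

/-- coordinate functionals -/
def lJ (K : ∀ i, Fin (p i)) : (⨂[ℂ] i, (Fin (p i) → ℂ)) →ₗ[ℂ] ℂ :=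
  PiTensorProduct.lift ((MultilinearMap.mkPiAlgebra ℂ (Fin r) ℂ).compLinearMap
    (fun i => LinearMap.proj (K i)))

lemma lJ_tprod (K : ∀ i, Fin (p i)) (v : ∀ i, Fin (p i) → ℂ) :
    lJ p K (tprod ℂ v) = ∏ i, v i (K i) := by
  simp [lJ]

lemma expand (v : ∀ i, Fin (p i) → ℂ) :
    tprod ℂ v = ∑ J : ∀ i, Fin (p i), (∏ i, v i (J i)) • eJ p J := by
  classical
  have hv : ∀ i, v i = ∑ j : Fin (p i), v i j • (Pi.single j 1 : Fin (p i) → ℂ) := by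
    intro i
    funext j'
    simp [Finset.sum_apply, Pi.single_apply]
  conv_lhs => rw [show v = fun i => ∑ j : Fin (p i), v i j • (Pi.single j 1 : Fin (p i) → ℂ) from funext hv]
  rw [MultilinearMap.map_sum (PiTensorProduct.tprod ℂ) (fun i j => v i j • (Pi.single j 1 : Fin (p i) → ℂ))]
  apply Finset.sum_congr rfl
  intro J _
  rw [MultilinearMap.map_smul_univ]
  rfl

lemma lJ_eJ (K J : ∀ i, Fin (p i)) : lJ p K (eJ p J) = if K = J then 1 else 0 := by
  classical
  rw [eJ, lJ_tprod]
  by_cases h : K = J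
  · subst h; simp
  · rw [if_neg h]
    obtain ⟨i, hi⟩ : ∃ i, K i ≠ J i := by
      by_contra hc; push_neg at hc; exact h (funext hc)
    exact Finset.prod_eq_zero (Finset.mem_univ i) (by simp [Pi.single_apply, (Ne.symm hi)])

lemma eJ_li : LinearIndependent ℂ (eJ p) := by
  classical
  apply LinearIndependent.of_comp (LinearMap.pi (fun K : ∀ i, Fin (p i) => lJ p K))
  have : (⇑(LinearMap.pi fun K : ∀ i, Fin (p i) => lJ p K) ∘ eJ p)
      = fun J => Pi.single J (1:ℂ) := by
    funext J
    funext K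
    simp [LinearMap.pi_apply, lJ_eJ, Pi.single_apply]
  rw [this]
  have h2 : (fun J : ∀ i, Fin (p i) => (Pi.single J (1:ℂ) : (∀ i, Fin (p i)) → ℂ))
      = ⇑(Pi.basisFun ℂ (∀ i, Fin (p i))) := by
    funext J; simp [Pi.basisFun_apply]
  rw [h2]
  exact (Pi.basisFun ℂ _).linearIndependent

lemma eJ_span : ⊤ ≤ Submodule.span ℂ (Set.range (eJ p)) := by
  rw [← PiTensorProduct.span_tprod_eq_top]
  rw [Submodule.span_le]
  rintro x ⟨v, rfl⟩
  rw [expand p v]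
  exact Submodule.sum_mem _ (fun J _ =>
    Submodule.smul_mem _ _ (Submodule.subset_span ⟨J, rfl⟩))

def bT : Module.Basis (∀ i, Fin (p i)) ℂ (⨂[ℂ] i, (Fin (p i) → ℂ)) :=
  Module.Basis.mk (eJ_li p) (eJ_span p)

end

end Tensor

-- general finrank of finite sup bound
lemma finrank_biSup_le {K V ι : Type*} [Field K] [AddCommGroup V] [Module K V]
    (t : Finset ι) (N : ι → Submodule K V) (hFD : ∀ i, FiniteDimensional K (N i))
    (E : ℕ) (hE : ∀ i, Module.finrank K (N i) ≤ E) :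
    FiniteDimensional K (⨆ i ∈ t, N i : Submodule K V) ∧
      Module.finrank K (⨆ i ∈ t, N i : Submodule K V) ≤ t.card * E := by
  classical
  induction t using Finset.induction_on with
  | empty =>
      rw [show (⨆ i ∈ (∅ : Finset ι), N i) = ⊥ by simp]
      refine ⟨inferInstance, ?_⟩
      simp [finrank_bot]
  | @insert a s ha ih =>
    rw [Finset.iSup_insert]
    obtain ⟨ihFD, ihle⟩ := ih
    have : FiniteDimensional K (N a ⊔ ⨆ i ∈ s, N i : Submodule K V) := by
      have := hFD a
      exact Submodule.finiteDimensional_sup _ _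
    refine ⟨this, ?_⟩
    have := hFD a
    have hsum := Submodule.finrank_sup_add_finrank_inf_eq (N a) (⨆ i ∈ s, N i)
    have hle : Module.finrank K ((N a) ⊔ (⨆ i ∈ s, N i) : Submodule K V)
        ≤ Module.finrank K (N a) + Module.finrank K (⨆ i ∈ s, N i : Submodule K V) := by
      omega
    rw [Finset.card_insert_of_notMem ha]
    calc Module.finrank K ((N a) ⊔ (⨆ i ∈ s, N i) : Submodule K V)
        ≤ Module.finrank K (N a) + Module.finrank K (⨆ i ∈ s, N i : Submodule K V) := hle
    _ ≤ E + s.card * E := by exact Nat.add_le_add (hE a) ihle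
    _ = (s.card + 1) * E := by ring



noncomputable def W (p : Fin r → ℕ) (d : ℕ) : Submodule ℂ (MvPolynomial (Idx p) ℂ) :=
  weightedHomogeneousSubmodule ℂ (w p) (δ r d)

lemma mem_W_bound {d : ℕ} {h : MvPolynomial (Idx p) ℂ} (hh : h ∈ W p d)
    {u : Idx p →₀ ℕ} (hu : u ∈ h.support) (s : Idx p) : u s ≤ d := by
  have hw : Finsupp.weight (w p) u = δ r d := hh (MvPolynomial.mem_support_iff.mp hu)
  have := weight_eval u s.1
  rw [hw] at this
  have hle : u s ≤ ∑ j : Fin (p s.1), u ⟨s.1, j⟩ :=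
    Finset.single_le_sum (f := fun j => u ⟨s.1, j⟩) (fun _ _ => Nat.zero_le _)
      (Finset.mem_univ s.2)
  rw [← this] at hle
  exact hle

lemma W_le_span (d : ℕ) :
    W p d ≤ Submodule.span ℂ
      (((Fintype.piFinset (fun _ : Idx p => Finset.range (d+1))).image
        (fun g => monomial (Finsupp.equivFunOnFinite.symm g) (1:ℂ))) : Set (MvPolynomial (Idx p) ℂ)) := by
  classical
  intro h hh
  rw [MvPolynomial.as_sum h]
  apply Submodule.sum_mem
  intro u hu
  have : (monomial u) (MvPolynomial.coeff u h)
      = (MvPolynomial.coeff u h) • (monomial u (1:ℂ)) := by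
    rw [MvPolynomial.smul_monomial, smul_eq_mul, mul_one]
  rw [this]
  apply Submodule.smul_mem
  apply Submodule.subset_span
  simp only [Finset.coe_image, Set.mem_image, Finset.mem_coe, Fintype.mem_piFinset]
  refine ⟨⇑u, fun s => Finset.mem_range.mpr (Nat.lt_succ_of_le (mem_W_bound hh hu s)), ?_⟩
  congr
  simp

instance Wfd (d : ℕ) : FiniteDimensional ℂ (W p d) := by
  have := W_le_span (p := p) d
  have : FiniteDimensional ℂ (Submodule.span ℂ
      (((Fintype.piFinset (fun _ : Idx p => Finset.range (d+1))).image
        (fun g => monomial (Finsupp.equivFunOnFinite.symm g) (1:ℂ))) : Set (MvPolynomial (Idx p) ℂ))) :=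
    inferInstance
  exact Submodule.finiteDimensional_of_le (W_le_span d)


section lower
variable (d c : ℕ)

/-- index type for an explicit independent family of monomials -/
abbrev T (p : Fin r → ℕ) (c : ℕ) := ∀ i : Fin r, (Fin (p i - 1) → Fin (c+1))

noncomputable def Si (a : T p c) (i : Fin r) : ℕ := ∑ j' : Fin (p i - 1), (a i j' : ℕ)

lemma Si_le (hc : ∀ i, (p i - 1) * c ≤ d) (a : T p c) (i : Fin r) : Si c a i ≤ d := by
  calc Si c a i ≤ ∑ _j' : Fin (p i - 1), c :=
        Finset.sum_le_sum (fun j' _ => Nat.lt_succ_iff.mp (a i j').isLt)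
  _ = (p i - 1) * c := by simp [Finset.sum_const, Finset.card_univ, Nat.mul_comm]
  _ ≤ d := hc i

noncomputable def nu (a : T p c) : Idx p →₀ ℕ :=
  Finsupp.equivFunOnFinite.symm
    (fun s => if h : (s.2 : ℕ) < p s.1 - 1 then (a s.1 ⟨s.2, h⟩ : ℕ) else d - Si c a s.1)

lemma nu_apply (a : T p c) (s : Idx p) :
    nu d c a s = if h : (s.2 : ℕ) < p s.1 - 1 then (a s.1 ⟨s.2, h⟩ : ℕ) else d - Si c a s.1 :=
  rfl

lemma nu_blocksum (hp : ∀ i, 1 ≤ p i) (hc : ∀ i, (p i - 1) * c ≤ d) (a : T p c) (i : Fin r) :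
    ∑ j : Fin (p i), nu d c a ⟨i, j⟩ = d := by
  have hq : p i - 1 + 1 = p i := Nat.succ_pred_eq_of_pos (hp i)
  rw [← Fin.sum_congr' (fun j => nu d c a ⟨i, j⟩) hq]
  rw [Fin.sum_univ_castSucc]
  have h1 : ∀ j : Fin (p i - 1),
      nu d c a ⟨i, Fin.cast hq j.castSucc⟩ = (a i j : ℕ) := by
    intro j
    rw [nu_apply]
    have hj : ((Fin.cast hq j.castSucc : Fin (p i)) : ℕ) < p i - 1 := j.isLt
    rw [dif_pos hj]
    congr 1
  have h2 : nu d c a ⟨i, Fin.cast hq (Fin.last (p i - 1))⟩ = d - Si c a i := by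
    rw [nu_apply]
    have : ¬ ((Fin.cast hq (Fin.last (p i - 1)) : Fin (p i)) : ℕ) < p i - 1 := by
      simp [Fin.last]
    rw [dif_neg this]
  rw [h2, Finset.sum_congr rfl (fun j _ => h1 j)]
  have : ∑ j : Fin (p i - 1), (a i j : ℕ) = Si c a i := rfl
  rw [this]
  have := Si_le d c hc a i
  omega

lemma nu_weight (hp : ∀ i, 1 ≤ p i) (hc : ∀ i, (p i - 1) * c ≤ d) (a : T p c) :
    Finsupp.weight (w p) (nu d c a) = δ r d := by
  funext i
  rw [weight_eval, nu_blocksum d c hp hc a i]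
  rfl

lemma nu_inj : Function.Injective (nu (p := p) d c) := by
  intro a b hab
  funext i j'
  have h := congrFun (congrArg (⇑) hab) ⟨i, Fin.castLE (Nat.sub_le _ _) j'⟩
  rw [nu_apply, nu_apply] at h
  have hj : ((Fin.castLE (Nat.sub_le (p i) 1) j' : Fin (p i)) : ℕ) < p i - 1 := j'.isLt
  rw [dif_pos hj, dif_pos hj] at h
  have : (⟨((Fin.castLE (Nat.sub_le (p i) 1) j' : Fin (p i)) : ℕ), hj⟩ : Fin (p i -1)) = j' :=
    Fin.ext rfl
  rw [this] at h
  exact Fin.ext h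

lemma lower_bound (hp : ∀ i, 1 ≤ p i) (hc : ∀ i, (p i - 1) * c ≤ d) : (c+1) ^ (∑ i, (p i - 1)) ≤ Module.finrank ℂ (W p d) := by
  classical
  have := Wfd (p := p) d
  have hmem : ∀ a : T p c, (monomial (nu d c a) (1:ℂ)) ∈ W p d := fun a =>
    isWeightedHomogeneous_monomial _ _ _ (nu_weight d c hp hc a)
  set G : T p c → W p d := fun a => ⟨monomial (nu d c a) 1, hmem a⟩ with hG
  have hGli : LinearIndependent ℂ G := by
    apply LinearIndependent.of_comp (W p d).subtype
    have : ((W p d).subtype ∘ G) = (fun a => monomial (nu d c a) (1:ℂ)) := rfl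
    rw [this]
    have hb : (fun a : T p c => monomial (nu d c a) (1:ℂ))
        = ⇑(basisMonomials (Idx p) ℂ) ∘ (nu d c) := by
      funext a; simp [coe_basisMonomials]
    rw [hb]
    exact (basisMonomials (Idx p) ℂ).linearIndependent.comp _ (nu_inj d c)
  have hcard := hGli.fintype_card_le_finrank
  calc (c+1) ^ (∑ i, (p i - 1)) = Fintype.card (T p c) := by
        simp [Fintype.card_pi, Finset.prod_pow_eq_pow_sum]
  _ ≤ Module.finrank ℂ (W p d) := hcard

end lower


/-- multiplication by a multilinear form commutes with graded projection -/
lemma wHC_mul_right {f : MvPolynomial (Idx p) ℂ}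
    (hf : f.IsWeightedHomogeneous (w p) (δ r 1)) (ν' : Fin r → ℕ)
    (g : MvPolynomial (Idx p) ℂ) :
    weightedHomogeneousComponent (w p) (ν' + δ r 1) (g * f)
      = (weightedHomogeneousComponent (w p) ν' g) * f := by
  classical
  induction g using MvPolynomial.induction_on' with
  | monomial u a =>
    by_cases hw : Finsupp.weight (w p) u = ν'
    · rw [((isWeightedHomogeneous_monomial (w p) u a hw).mul hf).weightedHomogeneousComponent_same,
        (isWeightedHomogeneous_monomial (w p) u a hw).weightedHomogeneousComponent_same]
    · rw [IsWeightedHomogeneous.weightedHomogeneousComponent_ne _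
        ((isWeightedHomogeneous_monomial (w p) u a rfl).mul hf)
        (fun hcon => hw (add_right_cancel hcon).symm),
        IsWeightedHomogeneous.weightedHomogeneousComponent_ne _
          (isWeightedHomogeneous_monomial (w p) u a rfl) (Ne.symm hw), zero_mul]
  | add g1 g2 ih1 ih2 =>
    rw [add_mul, map_add, map_add, ih1, ih2, add_mul]

noncomputable def bignu (J : ∀ i, Fin (p i)) : Idx p →₀ ℕ :=
  ∑ i, Finsupp.single ⟨i, J i⟩ 1

noncomputable def tmon (J : ∀ i, Fin (p i)) : MvPolynomial (Idx p) ℂ :=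
  monomial (bignu J) 1

lemma bignu_apply (J : ∀ i, Fin (p i)) (s : Idx p) :
    bignu J s = if s.2 = J s.1 then 1 else 0 := by
  classical
  rw [bignu, Finsupp.finset_sum_apply]
  rw [Finset.sum_eq_single s.1]
  · rw [Finsupp.single_apply]
    obtain ⟨i, j⟩ := s
    simp only [Sigma.mk.inj_iff, heq_eq_eq, true_and]
    by_cases h : j = J i
    · simp [h]
    · simp [h, Ne.symm h]
  · intro i _ hne
    rw [Finsupp.single_apply, if_neg]
    intro hcon
    exact hne (congrArg Sigma.fst hcon)
  · simp

lemma monomial_prod {ι : Type*} (t : Finset ι) (g : ι → (Idx p →₀ ℕ)) :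
    ∏ s ∈ t, monomial (g s) (1:ℂ) = monomial (∑ s ∈ t, g s) 1 := by
  classical
  induction t using Finset.induction_on with
  | empty => simp
  | @insert a s ha ih =>
    rw [Finset.prod_insert ha, Finset.sum_insert ha, ih, monomial_mul, one_mul]

lemma prod_X_eq_tmon (J : ∀ i, Fin (p i)) :
    ∏ i, (X ⟨i, J i⟩ : MvPolynomial (Idx p) ℂ) = tmon J := by
  rw [tmon, bignu, ← monomial_prod]
  exact Finset.prod_congr rfl (fun i _ => rfl)

lemma bignu_weight (J : ∀ i, Fin (p i)) : Finsupp.weight (w p) (bignu J) = δ r 1 := by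
  classical
  funext i
  rw [weight_eval]
  have : ∀ j : Fin (p i), bignu J ⟨i, j⟩ = if j = J i then 1 else 0 := fun j => bignu_apply J ⟨i, j⟩
  rw [Finset.sum_congr rfl (fun j _ => this j)]
  simp [δ]

lemma tmon_iswh (J : ∀ i, Fin (p i)) : (tmon J).IsWeightedHomogeneous (w p) (δ r 1) :=
  isWeightedHomogeneous_monomial _ _ _ (bignu_weight J)

/-- decompose a monomial with large exponents -/
lemma monomial_factor (J : ∀ i, Fin (p i)) (k : ℕ) (u : Idx p →₀ ℕ) (c : ℂ)
    (hu : ∀ i, k ≤ u ⟨i, J i⟩) :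
    monomial u c = (tmon J)^k * monomial (u - k • bignu J) c := by
  classical
  rw [tmon, monomial_pow, one_pow, monomial_mul, one_mul]
  have huu : k • bignu J + (u - k • bignu J) = u := by
    ext s
    have h1 : (k • bignu J) s = if s.2 = J s.1 then k else 0 := by
      rw [Finsupp.smul_apply, bignu_apply]
      by_cases h : s.2 = J s.1 <;> simp [h]
    have h2 : (k • bignu J) s ≤ u s := by
      rw [h1]
      by_cases h : s.2 = J s.1
      · rw [if_pos h]
        obtain ⟨i, j⟩ := s
        have hj : (⟨i, j⟩ : Idx p) = ⟨i, J i⟩ := by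
          simp only at h; rw [h]
        rw [hj]; exact hu i
      · rw [if_neg h]; exact Nat.zero_le _
    rw [Finsupp.add_apply, Finsupp.tsub_apply]
    omega
  rw [huu]

variable {m : ℕ}

lemma claimA (hp : ∀ i, 1 ≤ p i) (k : ℕ) (f : Fin m → MvPolynomial (Idx p) ℂ)
    (hf : ∀ j, (f j).IsWeightedHomogeneous (w p) (δ r 1))
    (hI : ∀ J : ∀ i, Fin (p i), (tmon J)^k ∈ Ideal.span (Set.range f))
    (d : ℕ) (hd : k * ∑ i, p i ≤ d) :
    W p (d+1) ≤ ⨆ j : Fin m, Submodule.map (LinearMap.mulLeft ℂ (f j)) (W p d) := by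
  classical
  intro h hh
  rw [MvPolynomial.as_sum h]
  apply Submodule.sum_mem
  intro u hu
  have hw : Finsupp.weight (w p) u = δ r (d+1) := hh (MvPolynomial.mem_support_iff.mp hu)
  -- pigeonhole
  have hpig : ∀ i, ∃ j : Fin (p i), k ≤ u ⟨i, j⟩ := by
    intro i
    by_contra hcon
    push_neg at hcon
    have hsum : ∑ j : Fin (p i), u ⟨i, j⟩ = d + 1 := by
      rw [← weight_eval, hw]; rfl
    have hps : p i ≤ ∑ i', p i' :=
      Finset.single_le_sum (f := fun i' => p i') (fun _ _ => Nat.zero_le _) (Finset.mem_univ i)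
    have : ∑ j : Fin (p i), u ⟨i, j⟩ ≤ p i * (k - 1) := by
      calc ∑ j : Fin (p i), u ⟨i, j⟩ ≤ ∑ _j : Fin (p i), (k-1) :=
            Finset.sum_le_sum (fun j _ => by have := hcon j; omega)
      _ = p i * (k-1) := by simp [Finset.sum_const, Finset.card_univ, Nat.mul_comm]
    have hk : p i * (k - 1) ≤ p i * k := Nat.mul_le_mul_left _ (Nat.sub_le _ _)
    have h5 : p i * k ≤ (∑ i', p i') * k := Nat.mul_le_mul_right _ hps
    have hcomm : (∑ i', p i') * k = k * ∑ i', p i' := Nat.mul_comm _ _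
    omega
  choose J hJ using hpig
  obtain ⟨cf, hcf⟩ := Ideal.mem_span_range_iff_exists_fun.mp (hI J)
  have hfac := monomial_factor J k u (MvPolynomial.coeff u h) hJ
  have hdecomp : (monomial u) (MvPolynomial.coeff u h)
      = ∑ j, ((monomial (u - k • bignu J) (MvPolynomial.coeff u h)) * cf j) * f j := by
    rw [hfac, ← hcf, Finset.sum_mul]
    exact Finset.sum_congr rfl (fun j _ => by ring)
  have hmono_wh : IsWeightedHomogeneous (w p) ((monomial u) (MvPolynomial.coeff u h)) (δ r (d+1)) :=
    isWeightedHomogeneous_monomial _ _ _ hw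
  have hproj : (monomial u) (MvPolynomial.coeff u h)
      = ∑ j, (weightedHomogeneousComponent (w p) (δ r d)
          ((monomial (u - k • bignu J) (MvPolynomial.coeff u h)) * cf j)) * f j := by
    conv_lhs => rw [← hmono_wh.weightedHomogeneousComponent_same, hdecomp]
    rw [map_sum]
    apply Finset.sum_congr rfl
    intro j _
    have hδ : δ r (d+1) = δ r d + δ r 1 := by funext i; rfl
    rw [hδ, wHC_mul_right (hf j)]
  rw [hproj]
  apply Submodule.sum_mem
  intro j _
  apply Submodule.mem_iSup_of_mem j
  refine ⟨weightedHomogeneousComponent (w p) (δ r d)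
      ((monomial (u - k • bignu J) (MvPolynomial.coeff u h)) * cf j), ?_, ?_⟩
  · exact weightedHomogeneousComponent_mem (w p) _ (δ r d)
  · rw [LinearMap.mulLeft_apply]; ring


variable {m : ℕ}

noncomputable def A (m s : ℕ) : Finset (Fin m → ℕ) :=
  (Fintype.piFinset fun _ => Finset.range (s+1)).filter (fun a => ∑ j, a j = s)

lemma mem_A {s : ℕ} {a : Fin m → ℕ} : a ∈ A m s ↔ ∑ j, a j = s := by
  classical
  constructor
  · intro h; exact (Finset.mem_filter.mp h).2
  · intro h
    refine Finset.mem_filter.mpr ⟨Fintype.mem_piFinset.mpr (fun j => Finset.mem_range.mpr ?_), h⟩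
    have : a j ≤ ∑ j', a j' :=
      Finset.single_le_sum (f := fun j' => a j') (fun _ _ => Nat.zero_le _) (Finset.mem_univ j)
    omega

lemma prod_pow_succ (f : Fin m → MvPolynomial (Idx p) ℂ) (a : Fin m → ℕ) (j : Fin m) :
    ∏ j', f j' ^ ((a + (Pi.single j 1 : Fin m → ℕ)) j') = f j * ∏ j', f j' ^ (a j') := by
  classical
  have : ∀ j', f j' ^ ((a + (Pi.single j 1 : Fin m → ℕ)) j') = f j' ^ (a j') * f j' ^ ((Pi.single j 1 : Fin m → ℕ) j') := by
    intro j'; rw [Pi.add_apply, pow_add]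
  rw [Finset.prod_congr rfl (fun j' _ => this j'), Finset.prod_mul_distrib]
  have h2 : ∏ j', f j' ^ ((Pi.single j 1 : Fin m → ℕ) j' : ℕ) = f j := by
    rw [Finset.prod_eq_single j]
    · simp
    · intro j' _ hne; simp [Pi.single_apply, hne]
    · simp
  rw [h2]; ring

lemma sum_add_single (a : Fin m → ℕ) (j : Fin m) :
    ∑ j', (a + (Pi.single j 1 : Fin m → ℕ)) j' = (∑ j', a j') + 1 := by
  classical
  rw [show (fun j' => (a + (Pi.single j 1 : Fin m → ℕ)) j') = fun j' => a j' + (Pi.single j 1 : Fin m → ℕ) j' from rfl]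
  rw [Finset.sum_add_distrib]
  congr 1
  rw [Finset.sum_eq_single j]
  · simp
  · intro j' _ hne; simp [Pi.single_apply, hne]
  · simp

lemma iterB (hp : ∀ i, 1 ≤ p i) (k : ℕ) (f : Fin m → MvPolynomial (Idx p) ℂ)
    (hf : ∀ j, (f j).IsWeightedHomogeneous (w p) (δ r 1))
    (hI : ∀ J : ∀ i, Fin (p i), (tmon J)^k ∈ Ideal.span (Set.range f))
    (d₀ : ℕ) (hd₀ : k * ∑ i, p i ≤ d₀) (s : ℕ) :
    W p (d₀ + s) ≤ ⨆ a ∈ A m s,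
      Submodule.map (LinearMap.mulLeft ℂ (∏ j, f j ^ (a j))) (W p d₀) := by
  classical
  induction s with
  | zero =>
    have h0 : (0 : Fin m → ℕ) ∈ A m 0 := mem_A.mpr (by simp)
    have : W p (d₀ + 0) ≤ Submodule.map (LinearMap.mulLeft ℂ (∏ j, f j ^ ((0 : Fin m → ℕ) j))) (W p d₀) := by
      simp only [Pi.zero_apply, pow_zero, Finset.prod_const_one, LinearMap.mulLeft_one,
        Submodule.map_id]
      exact le_of_eq (by rw [Nat.add_zero])
    exact le_trans this (le_iSup₂_of_le 0 h0 le_rfl)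
  | succ s ih =>
    have step := claimA hp k f hf hI (d₀ + s) (le_trans hd₀ (Nat.le_add_right _ _))
    rw [show d₀ + (s+1) = (d₀ + s) + 1 from rfl]
    refine le_trans step ?_
    refine iSup_le fun j => ?_
    have hmap := Submodule.map_mono (f := LinearMap.mulLeft ℂ (f j)) ih
    refine le_trans hmap ?_
    rw [Submodule.map_iSup]
    refine iSup_le fun a => ?_
    rw [Submodule.map_iSup]
    refine iSup_le fun ha => ?_
    rw [← Submodule.map_comp, ← LinearMap.mulLeft_mul]
    refine le_iSup₂_of_le (a + (Pi.single j 1 : Fin m → ℕ)) (mem_A.mpr (by rw [sum_add_single, mem_A.mp ha])) ?_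
    rw [prod_pow_succ]

lemma upperB (hp : ∀ i, 1 ≤ p i) (k : ℕ) (f : Fin m → MvPolynomial (Idx p) ℂ)
    (hf : ∀ j, (f j).IsWeightedHomogeneous (w p) (δ r 1))
    (hI : ∀ J : ∀ i, Fin (p i), (tmon J)^k ∈ Ideal.span (Set.range f))
    (d₀ : ℕ) (hd₀ : k * ∑ i, p i ≤ d₀) (s : ℕ) :
    Module.finrank ℂ (W p (d₀ + s)) ≤ (A m s).card * Module.finrank ℂ (W p d₀) := by
  classical
  have hWfd : ∀ d, FiniteDimensional ℂ (W p d) := fun d => Wfd d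
  have hN : ∀ a : Fin m → ℕ,
      FiniteDimensional ℂ (Submodule.map (LinearMap.mulLeft ℂ (∏ j, f j ^ (a j))) (W p d₀)) := by
    intro a
    have := hWfd d₀
    exact Module.Finite.map _ _
  obtain ⟨hFD, hle⟩ := finrank_biSup_le (A m s)
    (fun a => Submodule.map (LinearMap.mulLeft ℂ (∏ j, f j ^ (a j))) (W p d₀))
    hN (Module.finrank ℂ (W p d₀))
    (fun a => by have := hWfd d₀; exact Submodule.finrank_map_le _ _)
  have := hWfd (d₀ + s)
  exact le_trans (Submodule.finrank_mono (iterB hp k f hf hI d₀ hd₀ s)) hle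

lemma cardA_le (m' s : ℕ) : (A (m'+1) s).card ≤ (s+1)^(m') := by
  classical
  have : (A (m'+1) s).card ≤ (Fintype.piFinset fun _ : Fin m' => Finset.range (s+1)).card := by
    apply Finset.card_le_card_of_injOn (fun a => fun j : Fin m' => a j.castSucc)
    · intro a ha
      rw [Finset.mem_coe, Fintype.mem_piFinset]
      intro j
      have h1 := mem_A.mp ha
      have h2 : a j.castSucc ≤ ∑ j', a j' :=
        Finset.single_le_sum (f := fun j' => a j') (fun _ _ => Nat.zero_le _) (Finset.mem_univ _)
      exact Finset.mem_range.mpr (by show a j.castSucc < s + 1; omega)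
    · intro a ha b hb hab
      have ha' := mem_A.mp ha
      have hb' := mem_A.mp hb
      rw [Fin.sum_univ_castSucc] at ha' hb'
      have hcast : ∀ j : Fin m', a j.castSucc = b j.castSucc := fun j => congrFun hab j
      have hsum : ∑ j : Fin m', a j.castSucc = ∑ j : Fin m', b j.castSucc :=
        Finset.sum_congr rfl (fun j _ => hcast j)
      have hlast : a (Fin.last m') = b (Fin.last m') := by omega
      funext j
      rcases Fin.eq_castSucc_or_eq_last j with ⟨j', rfl⟩ | rfl
      · exact hcast j'
      · exact hlast
  calc (A (m'+1) s).card ≤ _ := this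
  _ = (s+1)^(m') := by simp


theorem core (hp : ∀ i, 1 ≤ p i) (m : ℕ) (hm : m ≤ ∑ i, (p i - 1))
    (f : Fin m → MvPolynomial (Idx p) ℂ)
    (hf : ∀ j, (f j).IsWeightedHomogeneous (w p) (δ r 1)) :
    ∃ x : Idx p → ℂ, (∀ i, ∃ j : Fin (p i), x ⟨i, j⟩ ≠ 0) ∧ ∀ j, eval x (f j) = 0 := by
  classical
  by_contra hcon
  push_neg at hcon
  -- every point with all blocks nonzero fails some equation
  have hrad : ∀ J : ∀ i, Fin (p i), tmon J ∈ (Ideal.span (Set.range f)).radical := by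
    intro J
    rw [← MvPolynomial.vanishingIdeal_zeroLocus_eq_radical (K := ℂ)]
    intro x hx
    have hfx : ∀ j, eval x (f j) = 0 := fun j => hx (f j) (Ideal.subset_span ⟨j, rfl⟩)
    by_cases hblocks : ∀ i, ∃ j : Fin (p i), x ⟨i, j⟩ ≠ 0
    · obtain ⟨j, hj⟩ := hcon x hblocks
      exact absurd (hfx j) hj
    · push_neg at hblocks
      obtain ⟨i₀, hi₀⟩ := hblocks
      rw [← prod_X_eq_tmon, map_prod]
      refine Finset.prod_eq_zero (Finset.mem_univ i₀) ?_
      rw [aeval_X]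
      exact hi₀ (J i₀)
  -- uniform exponent
  have hpow : ∀ J : ∀ i, Fin (p i), ∃ n, (tmon J)^n ∈ Ideal.span (Set.range f) := by
    intro J
    exact Ideal.mem_radical_iff.mp (hrad J)
  choose kJ hkJ using hpow
  set k := (Finset.univ.sup kJ) + 1 with hk
  have hIk : ∀ J : ∀ i, Fin (p i), (tmon J)^k ∈ Ideal.span (Set.range f) := by
    intro J
    refine (Ideal.span (Set.range f)).pow_mem_of_pow_mem (hkJ J) ?_
    have : kJ J ≤ Finset.univ.sup kJ := Finset.le_sup (Finset.mem_univ J)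
    omega
  -- m must be positive
  rcases Nat.eq_zero_or_pos m with hm0 | hmpos
  · subst hm0
    obtain ⟨j, _⟩ := hcon (fun _ => 1) (fun i => ⟨⟨0, hp i⟩, one_ne_zero⟩)
    exact j.elim0
  obtain ⟨m', rfl⟩ : ∃ m', m = m' + 1 := ⟨m - 1, by omega⟩
  -- counting setup
  set D := ∑ i, (p i - 1) with hD
  set Q := ∑ i, p i with hQ
  have hDQ : D ≤ Q := Finset.sum_le_sum (fun i _ => Nat.sub_le _ _)
  have hDpos : 1 ≤ D := le_trans hmpos hm
  have hQpos : 1 ≤ Q := le_trans hDpos hDQ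
  set d₀ := k * Q with hd₀
  set E := Module.finrank ℂ (W p d₀) with hE
  set s := Q^D * E with hs
  set d := d₀ + s with hd
  set c := d / Q with hc
  have hcineq : ∀ i, (p i - 1) * c ≤ d := by
    intro i
    have h1 : p i - 1 ≤ Q := le_trans (Nat.sub_le _ _)
      (Finset.single_le_sum (f := fun i' => p i') (fun _ _ => Nat.zero_le _) (Finset.mem_univ i))
    calc (p i - 1) * c ≤ Q * c := Nat.mul_le_mul_right _ h1
    _ ≤ d := by rw [hc, Nat.mul_comm]; exact Nat.div_mul_le_self d Q
  have hlow := lower_bound d c hp hcineq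
  have hup := upperB hp k f hf hIk d₀ le_rfl s
  have hcard := cardA_le m' s
  rw [← hd] at hup
  -- combine
  have hEup : Module.finrank ℂ (W p d) ≤ (s+1)^(m') * E :=
    le_trans hup (Nat.mul_le_mul_right _ hcard)
  have hchain : (c+1)^D ≤ (s+1)^(m') * E := le_trans hlow hEup
  have hm' : m' ≤ D - 1 := by omega
  have hpowm : (s+1)^(m') ≤ (s+1)^(D-1) := Nat.pow_le_pow_right (by omega) hm'
  have hchain2 : (c+1)^D ≤ (s+1)^(D-1) * E :=
    le_trans hchain (Nat.mul_le_mul_right _ hpowm)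
  -- s + 1 ≤ Q * (c + 1)
  have hsc : s + 1 ≤ Q * (c+1) := by
    have hmod : d % Q < Q := Nat.mod_lt _ (by omega)
    have hdm : Q * c + d % Q = d := by rw [hc]; exact Nat.div_add_mod d Q
    have hexp : Q * (c+1) = Q * c + Q := by ring
    omega
  -- final contradiction
  have hfin : (s+1)^D ≤ (Q*(c+1))^D := Nat.pow_le_pow_left hsc D
  have hfin2 : (Q*(c+1))^D = Q^D * (c+1)^D := mul_pow _ _ _
  have hfin3 : (s+1)^D ≤ Q^D * ((s+1)^(D-1) * E) := by
    calc (s+1)^D ≤ Q^D * (c+1)^D := by rw [← hfin2]; exact hfin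
    _ ≤ Q^D * ((s+1)^(D-1) * E) := Nat.mul_le_mul_left _ hchain2
  have hsplit : (s+1)^D = (s+1)^(D-1) * (s+1) := by
    conv_lhs => rw [show D = (D-1) + 1 by omega]
    rw [pow_succ]
  rw [hsplit] at hfin3
  have hfin4 : (s+1)^(D-1) * (s+1) ≤ (s+1)^(D-1) * (Q^D * E) := by
    calc (s+1)^(D-1) * (s+1) ≤ Q^D * ((s+1)^(D-1) * E) := hfin3
    _ = (s+1)^(D-1) * (Q^D * E) := by ring
  have hppos : 0 < (s+1)^(D-1) := Nat.pow_pos (by omega)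
  have : s + 1 ≤ Q^D * E := Nat.le_of_mul_le_mul_left hfin4 hppos
  omega


lemma tprod_ne_zero (v : ∀ i, Fin (p i) → ℂ) (hv : ∀ i, v i ≠ 0) :
    tprod ℂ v ≠ 0 := by
  classical
  have hJ : ∀ i, ∃ j : Fin (p i), v i j ≠ 0 := by
    intro i
    by_contra hcon
    push_neg at hcon
    exact hv i (funext hcon)
  choose J hJ' using hJ
  intro h0
  have := lJ_tprod p J v
  rw [h0, map_zero] at this
  exact (Finset.prod_ne_zero_iff.mpr (fun i _ => hJ' i)) this.symm


end CES

open CES MvPolynomial PiTensorProduct in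
/-- (Parthasarathy) A subspace of `ℂ^{p 1} ⊗ ⋯ ⊗ ℂ^{p r}` containing no nonzero
decomposable tensor has dimension at most `∏ p i − ∑ p i + r − 1`. -/
theorem stmt_4 (r : ℕ) (p : Fin r → ℕ) (hp : ∀ i, 1 ≤ p i)
    (S : Submodule ℂ (⨂[ℂ] i : Fin r, (Fin (p i) → ℂ)))
    (hS : ∀ v : (i : Fin r) → (Fin (p i) → ℂ),
      PiTensorProduct.tprod ℂ v ∈ S → PiTensorProduct.tprod ℂ v = 0) :
    (Module.finrank ℂ S : ℤ) ≤ (∏ i, (p i : ℤ)) - (∑ i, (p i : ℤ)) + r - 1 := by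
  classical
  by_contra hlt
  push_neg at hlt
  set V := (⨂[ℂ] i : Fin r, (Fin (p i) → ℂ)) with hV
  have : FiniteDimensional ℂ V := Module.Finite.of_basis (bT p)
  have hfrV : Module.finrank ℂ V = ∏ i, p i := by
    rw [Module.finrank_eq_card_basis (bT p), Fintype.card_pi]
    simp
  set m := Module.finrank ℂ (V ⧸ S) with hm
  have hmn : m + Module.finrank ℂ S = ∏ i, p i := by
    rw [hm, Submodule.finrank_quotient_add_finrank, hfrV]
  -- m ≤ ∑ (p i - 1)
  have hcastD : ((∑ i, (p i - 1) : ℕ) : ℤ) = (∑ i, (p i : ℤ)) - r := by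
    rw [Nat.cast_sum]
    rw [Finset.sum_congr rfl (fun i (_ : i ∈ Finset.univ) => (Nat.cast_sub (hp i)))]
    rw [Finset.sum_sub_distrib]
    simp
  have hcastN : ((∏ i, p i : ℕ) : ℤ) = ∏ i, (p i : ℤ) := Nat.cast_prod _ _
  have hmD : m ≤ ∑ i, (p i - 1) := by
    have h1 : ((m : ℤ)) + (Module.finrank ℂ S : ℤ) = ∏ i, (p i : ℤ) := by
      rw [← hcastN]; exact_mod_cast congrArg (Nat.cast : ℕ → ℤ) hmn
    have h2 : (m : ℤ) ≤ ((∑ i, (p i - 1) : ℕ) : ℤ) := by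
      rw [hcastD]; linarith
    exact_mod_cast h2
  -- functionals cutting out S
  set qb : Module.Basis (Fin m) ℂ (V ⧸ S) := Module.finBasis ℂ (V ⧸ S) with hqb
  set φ : Fin m → V →ₗ[ℂ] ℂ := fun j => (qb.coord j) ∘ₗ S.mkQ with hφ
  have hmem : ∀ y : V, (∀ j, φ j y = 0) → y ∈ S := by
    intro y hy
    have hq : S.mkQ y = 0 := by
      apply qb.ext_elem
      intro j
      have := hy j
      simp only [hφ, LinearMap.comp_apply, Module.Basis.coord_apply, Submodule.mkQ_apply] at this
      simp [this]
    rwa [Submodule.mkQ_apply, Submodule.Quotient.mk_eq_zero] at hq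
  -- the polynomials
  set f : Fin m → MvPolynomial (Idx p) ℂ :=
    fun j => ∑ J : ∀ i, Fin (p i), C (φ j (eJ p J)) * ∏ i, X ⟨i, J i⟩ with hf
  have hfwh : ∀ j, (f j).IsWeightedHomogeneous (w p) (δ r 1) := by
    intro j
    rw [← mem_weightedHomogeneousSubmodule]
    apply Submodule.sum_mem
    intro J _
    rw [prod_X_eq_tmon, tmon, C_mul_monomial, mul_one, mem_weightedHomogeneousSubmodule]
    exact isWeightedHomogeneous_monomial _ _ _ (bignu_weight J)
  have heval : ∀ (j : Fin m) (x : Idx p → ℂ),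
      eval x (f j) = φ j (tprod ℂ (fun i => fun j' => x ⟨i, j'⟩)) := by
    intro j x
    have hfj : f j = ∑ J : ∀ i, Fin (p i), C (φ j (eJ p J)) * ∏ i, X ⟨i, J i⟩ := by rw [hf]
    rw [hfj, map_sum, expand p (fun i => fun j' => x ⟨i, j'⟩), map_sum]
    apply Finset.sum_congr rfl
    intro J _
    rw [_root_.map_mul, eval_C, map_prod, map_smul, smul_eq_mul]
    have hX : ∀ i : Fin r, eval x (X (⟨i, J i⟩ : Idx p)) = x ⟨i, J i⟩ := fun i => eval_X _
    rw [Finset.prod_congr rfl (fun i _ => hX i)]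
    ring
  obtain ⟨x, hx1, hx2⟩ := core hp m hmD f hfwh
  set v : ∀ i, Fin (p i) → ℂ := fun i => fun j' => x ⟨i, j'⟩ with hv
  have hvne : ∀ i, v i ≠ 0 := by
    intro i hcon
    obtain ⟨j, hj⟩ := hx1 i
    exact hj (congrFun hcon j)
  have hmemS : tprod ℂ v ∈ S := hmem _ (fun j => by rw [← heval j x]; exact hx2 j)
  exact tprod_ne_zero v hvne (hS v hmemS)
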